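/- The cyclic factorization number of ZM(9,4,8), counting ordered pairs of cyclic subgroups (H,K) with HK = G, equals 36. -/

import Mathlib

open Pointwise

/-- The relators of the Zassenhaus metacyclic group
`ZM(m,n,r) = ⟨a, b | a^m = b^n = 1, b⁻¹ab = a^r⟩`. -/
def ZMrel (m n r : ℕ) : Set (FreeGroup (Fin 2)) :=
  {FreeGroup.of 0 ^ m, FreeGroup.of 1 ^ n,
   (FreeGroup.of 1)⁻¹ * FreeGroup.of 0 * FreeGroup.of 1 * (FreeGroup.of 0 ^ r)⁻¹}

/-- The ZM-group `ZM(m,n,r)` as a presented group. -/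
abbrev ZM (m n r : ℕ) : Type := PresentedGroup (ZMrel m n r)

/-- The generator `a` of `ZM(m,n,r)`. -/
def za (m n r : ℕ) : ZM m n r := PresentedGroup.of 0

/-- The generator `b` of `ZM(m,n,r)`. -/
def zb (m n r : ℕ) : ZM m n r := PresentedGroup.of 1

set_option maxRecDepth 10000

namespace CF2aux

local notation "A" => za 9 4 8
local notation "B" => zb 9 4 8

lemma mk_rel {r : FreeGroup (Fin 2)} (h : r ∈ ZMrel 9 4 8) :
    PresentedGroup.mk (ZMrel 9 4 8) r = 1 := by
  have : r ∈ Subgroup.normalClosure (ZMrel 9 4 8) := Subgroup.subset_normalClosure h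
  exact (QuotientGroup.eq_one_iff r).mpr this

lemma R1 : A ^ 9 = 1 := by
  have h := mk_rel (show FreeGroup.of 0 ^ 9 ∈ ZMrel 9 4 8 from Or.inl rfl)
  rw [map_pow] at h
  exact h

lemma R2 : B ^ 4 = 1 := by
  have h := mk_rel (show FreeGroup.of 1 ^ 4 ∈ ZMrel 9 4 8 from Or.inr (Or.inl rfl))
  rw [map_pow] at h
  exact h

lemma R3 : B⁻¹ * A * B = A ^ 8 := by
  have h := mk_rel (show (FreeGroup.of 1)⁻¹ * FreeGroup.of 0 * FreeGroup.of 1 *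
      (FreeGroup.of 0 ^ 8)⁻¹ ∈ ZMrel 9 4 8 from Or.inr (Or.inr rfl))
  simp only [map_mul, map_inv, map_pow] at h
  have := mul_eq_one_iff_eq_inv.mp h
  rw [inv_inv] at this
  exact this

lemma A8 : A ^ 8 = A⁻¹ := by
  have : A ^ 9 * A⁻¹ = A ^ 8 := by group
  rw [R1, one_mul] at this; exact this.symm

lemma hAB : A * B = B * A⁻¹ := by
  have h := R3; rw [A8] at h
  calc A * B = B * (B⁻¹ * A * B) := by group
  _ = B * A⁻¹ := by rw [h]

lemma hBA : B * A = A⁻¹ * B := by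
  calc B * A = A⁻¹ * (A * B) * A := by group
  _ = A⁻¹ * (B * A⁻¹) * A := by rw [hAB]
  _ = A⁻¹ * B := by group

noncomputable def C : ZM 9 4 8 := A * B ^ 2

lemma hcommB2 : B ^ 2 * A = A * B ^ 2 := by
  calc B ^ 2 * A = B * (B * A) := by rw [pow_two]; group
  _ = B * (A⁻¹ * B) := by rw [hBA]
  _ = (B * A⁻¹) * B := by group
  _ = (A * B) * B := by rw [← hAB]
  _ = A * B ^ 2 := by rw [pow_two]; group

lemma hC2 : C ^ 2 = A ^ 2 := by
  have h1 : C ^ 2 = A * (B ^ 2 * A) * B ^ 2 := by unfold C; rw [pow_two]; group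
  rw [h1, hcommB2]
  have h2 : A * (A * B ^ 2) * B ^ 2 = A ^ 2 * B ^ 4 := by
    rw [show (4:ℕ) = 2+2 from rfl, pow_add, pow_two, pow_two]
    group
  rw [h2, R2, mul_one]

lemma hC18 : C ^ 18 = 1 := by
  have h1 : C ^ 18 = (C ^ 2) ^ 9 := by group
  rw [h1, hC2, ← pow_mul]
  have h2 : A ^ (2 * 9) = (A ^ 9) ^ 2 := by group
  rw [h2, R1, one_pow]

lemma hC9 : C ^ 9 = B ^ 2 := by
  have h1 : C ^ 9 = (C ^ 2) ^ 4 * C := by group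
  rw [h1, hC2]
  calc (A ^ 2) ^ 4 * C = A ^ 8 * A * B ^ 2 := by unfold C; group
  _ = A ^ 9 * B ^ 2 := by group
  _ = B ^ 2 := by rw [R1, one_mul]

lemma hBC : B * C = C⁻¹ * B := by
  have hCinv : C⁻¹ = A⁻¹ * B ^ 2 := by
    have h1 : C⁻¹ = B⁻¹ ^ 2 * A⁻¹ := by unfold C; group
    rw [h1]
    have hb : B⁻¹ ^ 2 = B ^ 2 := by
      have h2 : B ^ 4 * B⁻¹ ^ 2 = B ^ 2 := by group
      rw [R2, one_mul] at h2; exact h2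
    rw [hb]
    calc B ^ 2 * A⁻¹ = A⁻¹ * (A * B ^ 2 * A⁻¹) := by group
    _ = A⁻¹ * (B ^ 2 * A * A⁻¹) := by rw [← hcommB2]
    _ = A⁻¹ * B ^ 2 := by group
  rw [hCinv]
  calc B * C = (B * A) * B ^ 2 := by unfold C; group
  _ = A⁻¹ * B * B ^ 2 := by rw [hBA]
  _ = A⁻¹ * (B ^ 2 * B) := by group
  _ = A⁻¹ * B ^ 2 * B := by group

lemma hBCpow (k : ℕ) : B * C ^ k = (C ^ k)⁻¹ * B := by
  induction k with
  | zero => simp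
  | succ k ih =>
    calc B * C ^ (k+1) = (B * C ^ k) * C := by group
    _ = (C ^ k)⁻¹ * (B * C) := by rw [ih]; group
    _ = (C ^ k)⁻¹ * (C⁻¹ * B) := by rw [hBC]
    _ = (C ^ (k+1))⁻¹ * B := by group

noncomputable def χ (i : ZMod 18) : ZM 9 4 8 := C ^ i.val

lemma hmod (k : ℕ) : C ^ (k % 18) = C ^ k := by
  conv_rhs => rw [← Nat.div_add_mod k 18]
  rw [pow_add, pow_mul, hC18, one_pow, one_mul]

lemma χ_add (i j : ZMod 18) : χ (i + j) = χ i * χ j := by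
  unfold χ
  rw [← pow_add, ZMod.val_add, hmod]

lemma χ_zero : χ 0 = 1 := by unfold χ; simp [ZMod.val_zero]

lemma χ_neg (i : ZMod 18) : χ (-i) = (χ i)⁻¹ := by
  have h : χ (-i) * χ i = 1 := by rw [← χ_add, neg_add_cancel, χ_zero]
  exact eq_inv_of_mul_eq_one_left h

lemma χ_nine : χ 9 = B ^ 2 := by
  have h : (9 : ZMod 18).val = 9 := by decide
  unfold χ; rw [h, hC9]

lemma hBχ (i : ZMod 18) : B * χ i = χ (-i) * B := by
  rw [χ_neg]
  unfold χ
  exact hBCpow i.val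

abbrev Q := QuaternionGroup 9

noncomputable def gfun : Q → ZM 9 4 8
  | .a i => χ i
  | .xa i => χ (-i) * B

noncomputable def ghom : Q →* ZM 9 4 8 :=
  MonoidHom.mk' gfun (by
    rintro (i | i) (j | j) <;>
      simp only [gfun, QuaternionGroup.a_mul_a, QuaternionGroup.a_mul_xa,
        QuaternionGroup.xa_mul_a, QuaternionGroup.xa_mul_xa]
    · exact χ_add i j
    · rw [← mul_assoc, ← χ_add]
      congr 1
      ring_nf
    · rw [mul_assoc, hBχ, ← mul_assoc, ← χ_add]
      congr 2
      ring
    · symm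
      calc χ (-i) * B * (χ (-j) * B) = χ (-i) * (B * χ (-j)) * B := by group
      _ = χ (-i) * (χ j * B) * B := by rw [hBχ, neg_neg]
      _ = χ (-i) * χ j * B ^ 2 := by rw [pow_two]; group
      _ = χ (-i) * χ j * χ 9 := by rw [χ_nine]
      _ = χ (-i + j + 9) := by rw [χ_add, χ_add]
      _ = χ ((9 : ℕ) + j - i) := by congr 1; push_cast; ring)

def f0 : Fin 2 → Q
  | 0 => QuaternionGroup.a 10
  | 1 => QuaternionGroup.xa 0

lemma f0rels : ∀ r ∈ ZMrel 9 4 8, FreeGroup.lift f0 r = 1 := by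
  rintro r (rfl | rfl | rfl) <;>
    simp only [map_pow, map_mul, map_inv, FreeGroup.lift_apply_of] <;> decide

noncomputable def fhom : ZM 9 4 8 →* Q := PresentedGroup.toGroup f0rels

lemma f_za : fhom A = QuaternionGroup.a 10 := PresentedGroup.toGroup.of f0rels

lemma f_zb : fhom B = QuaternionGroup.xa 0 := PresentedGroup.toGroup.of f0rels

lemma fC : fhom C = QuaternionGroup.a 1 := by
  unfold C
  rw [map_mul, map_pow, f_za, f_zb]
  decide

lemma g_a (i : ZMod (2 * 9)) : ghom (QuaternionGroup.a i) = χ i := rfl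

lemma g_xa (i : ZMod (2 * 9)) : ghom (QuaternionGroup.xa i) = χ (-i) * B := rfl

lemma fχ (i : ZMod 18) : fhom (χ i) = QuaternionGroup.a i := by
  unfold χ
  rw [map_pow, fC, QuaternionGroup.a_one_pow]
  congr 1
  rw [ZMod.natCast_val, ZMod.cast_id]

lemma fg : ∀ q : Q, fhom (ghom q) = q := by
  rintro (i | i)
  · rw [g_a, fχ]
  · rw [g_xa, map_mul, fχ, f_zb]
    rw [QuaternionGroup.a_mul_xa]
    congr 1
    ring

lemma g_a1 : ghom (QuaternionGroup.a 1) = C := by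
  rw [g_a]
  unfold χ
  rw [show ((1 : ZMod 18).val) = 1 from rfl, pow_one]

lemma g_xa0 : ghom (QuaternionGroup.xa 0) = B := by
  rw [g_xa, neg_zero, χ_zero, one_mul]

lemma g_surj : Function.Surjective ghom := by
  intro x
  have hx : x ∈ ghom.range := by
    refine PresentedGroup.generated_by _ _ ?_ x
    intro j
    fin_cases j
    · refine ⟨QuaternionGroup.a 1 * QuaternionGroup.xa 0 * QuaternionGroup.xa 0, ?_⟩
      rw [map_mul, map_mul, g_a1, g_xa0]
      show C * B * B = A
      rw [mul_assoc, ← pow_two]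
      unfold C
      rw [mul_assoc, ← pow_add, show (2 + 2 : ℕ) = 4 from rfl, R2, mul_one]
    · exact ⟨QuaternionGroup.xa 0, g_xa0⟩
  exact hx

lemma f_bij : Function.Bijective fhom := by
  constructor
  · intro x y hxy
    obtain ⟨u, rfl⟩ := g_surj x
    obtain ⟨v, rfl⟩ := g_surj y
    have h2 : fhom (ghom u) = fhom (ghom v) := hxy
    rw [fg, fg] at h2
    rw [h2]
  · intro q
    exact ⟨ghom q, fg q⟩

noncomputable def e : ZM 9 4 8 ≃* Q := MulEquiv.ofBijective fhom f_bij

/-! ### Counting in the quaternion group -/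

def cyc (g : Q) : Finset Q := (Finset.range 36).image (g ^ ·)

def gens : Finset (Finset Q) := Finset.univ.image cyc

def T : Finset (Finset Q × Finset Q) :=
  (gens ×ˢ gens).filter (fun p => ∀ x : Q, ∃ a ∈ p.1, ∃ b ∈ p.2, a * b = x)

set_option maxRecDepth 1000000 in
set_option maxHeartbeats 4000000 in
lemma Tcard : T.card = 36 := by decide

noncomputable def fs (H : Subgroup Q) : Finset Q := (Set.toFinite (H : Set Q)).toFinset

lemma coe_fs (H : Subgroup Q) : (fs H : Set Q) = (H : Set Q) := Set.Finite.coe_toFinset _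

lemma fs_inj : Function.Injective fs := by
  intro H K h
  have : (H : Set Q) = (K : Set Q) := by rw [← coe_fs, ← coe_fs, h]
  exact SetLike.coe_injective this

lemma coe_cyc (g : Q) : (cyc g : Set Q) = (Subgroup.zpowers g : Set Q) := by
  ext x
  simp only [cyc, Finset.coe_image, Finset.coe_range, Set.mem_image, Set.mem_Iio,
    SetLike.mem_coe]
  constructor
  · rintro ⟨k, -, rfl⟩
    exact (Subgroup.zpowers g).pow_mem (Subgroup.mem_zpowers g) k
  · intro hx
    have hfin : x ∈ Submonoid.powers g := mem_powers_iff_mem_zpowers.mpr hx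
    obtain ⟨k, rfl⟩ := hfin
    refine ⟨k % orderOf g, ?_, pow_mod_orderOf g k⟩
    have h1 : orderOf g ∣ 36 := by
      have h3 := orderOf_dvd_card (x := g)
      rwa [QuaternionGroup.card] at h3
    have h2 : 0 < orderOf g := orderOf_pos g
    exact lt_of_lt_of_le (Nat.mod_lt _ h2) (Nat.le_of_dvd (by norm_num) h1)

lemma isCyclic_zpowers (g : Q) : IsCyclic (Subgroup.zpowers g) := by
  refine ⟨⟨⟨g, Subgroup.mem_zpowers g⟩, ?_⟩⟩
  rintro ⟨x, hx⟩
  obtain ⟨k, hk⟩ := hx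
  exact ⟨k, Subtype.ext (by simpa using hk)⟩

lemma isCyclic_iff (H : Subgroup Q) : IsCyclic H ↔ ∃ g : Q, H = Subgroup.zpowers g := by
  constructor
  · intro hc
    obtain ⟨⟨g, hgH⟩, hgen⟩ := hc.exists_generator
    refine ⟨g, le_antisymm ?_ ?_⟩
    · intro x hx
      obtain ⟨k, hk⟩ := hgen ⟨x, hx⟩
      have h4 : g ^ k = x := by
        have h5 := congrArg (Subtype.val) hk
        simpa using h5
      exact ⟨k, h4⟩
    · intro x hx
      obtain ⟨k, hk⟩ := hx
      rw [← hk]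
      exact Subgroup.zpow_mem H hgH k
  · rintro ⟨g, rfl⟩
    exact isCyclic_zpowers g

lemma mem_gens_iff (H : Subgroup Q) : fs H ∈ gens ↔ IsCyclic H := by
  rw [isCyclic_iff]
  unfold gens
  rw [Finset.mem_image]
  constructor
  · rintro ⟨g, -, hg⟩
    refine ⟨g, ?_⟩
    apply SetLike.coe_injective
    rw [← coe_fs, ← hg, coe_cyc]
  · rintro ⟨g, rfl⟩
    refine ⟨g, Finset.mem_univ g, ?_⟩
    apply Finset.coe_injective
    rw [coe_fs, coe_cyc]

lemma cond_iff (H K : Subgroup Q) :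
    (∀ x : Q, ∃ a ∈ fs H, ∃ b ∈ fs K, a * b = x) ↔
      (H : Set Q) * (K : Set Q) = Set.univ := by
  rw [Set.eq_univ_iff_forall]
  apply forall_congr'
  intro x
  rw [Set.mem_mul]
  constructor
  · rintro ⟨a, ha, b, hb, rfl⟩
    refine ⟨a, ?_, b, ?_, rfl⟩
    · have h2 : a ∈ (fs H : Set Q) := ha
      rwa [coe_fs] at h2
    · have h2 : b ∈ (fs K : Set Q) := hb
      rwa [coe_fs] at h2
  · rintro ⟨a, ha, b, hb, rfl⟩
    refine ⟨a, ?_, b, ?_, rfl⟩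
    · have h2 : a ∈ (fs H : Set Q) := by rw [coe_fs]; exact ha
      exact Finset.mem_coe.mp h2
    · have h2 : b ∈ (fs K : Set Q) := by rw [coe_fs]; exact hb
      exact Finset.mem_coe.mp h2

lemma mem_T_iff (H K : Subgroup Q) :
    (fs H, fs K) ∈ T ↔ (IsCyclic H ∧ IsCyclic K ∧ (H : Set Q) * (K : Set Q) = Set.univ) := by
  unfold T
  rw [Finset.mem_filter, Finset.mem_product]
  rw [mem_gens_iff, mem_gens_iff, cond_iff]
  rw [and_assoc]

attribute [irreducible] T gens cyc fs

noncomputable def Φ :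
    {p : Subgroup Q × Subgroup Q // IsCyclic p.1 ∧ IsCyclic p.2 ∧
        (p.1 : Set Q) * (p.2 : Set Q) = Set.univ} → {x // x ∈ T} :=
  fun p => ⟨(fs p.1.1, fs p.1.2), (mem_T_iff p.1.1 p.1.2).mpr p.2⟩

lemma Φ_bij : Function.Bijective Φ := by
  constructor
  · rintro ⟨⟨H, K⟩, h⟩ ⟨⟨H', K'⟩, h'⟩ heq
    have h1 := congrArg (fun x => x.1.1) heq
    have h2 := congrArg (fun x => x.1.2) heq
    simp only [Φ] at h1 h2
    exact Subtype.ext (Prod.ext (fs_inj h1) (fs_inj h2))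
  · rintro ⟨⟨A', B'⟩, hAB⟩
    have hAB' := hAB
    unfold T at hAB'
    rw [Finset.mem_filter, Finset.mem_product] at hAB'
    obtain ⟨⟨hA, hB⟩, -⟩ := hAB'
    rw [gens, Finset.mem_image] at hA hB
    obtain ⟨g, -, rfl⟩ := hA
    obtain ⟨k, -, rfl⟩ := hB
    have hgA : fs (Subgroup.zpowers g) = cyc g := by
      apply Finset.coe_injective; rw [coe_fs, coe_cyc]
    have hkB : fs (Subgroup.zpowers k) = cyc k := by
      apply Finset.coe_injective; rw [coe_fs, coe_cyc]
    have hmem : (fs (Subgroup.zpowers g), fs (Subgroup.zpowers k)) ∈ T := by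
      rw [hgA, hkB]; exact hAB
    refine ⟨⟨(Subgroup.zpowers g, Subgroup.zpowers k), (mem_T_iff _ _).mp hmem⟩, ?_⟩
    apply Subtype.ext
    show (fs (Subgroup.zpowers g), fs (Subgroup.zpowers k)) = (cyc g, cyc k)
    rw [hgA, hkB]

lemma main_count :
    Nat.card {p : Subgroup Q × Subgroup Q // IsCyclic p.1 ∧ IsCyclic p.2 ∧
        (p.1 : Set Q) * (p.2 : Set Q) = Set.univ} = T.card := by
  rw [Nat.card_congr (Equiv.ofBijective Φ Φ_bij), Nat.card_eq_finsetCard]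

/-! ### Transfer along the isomorphism -/

lemma cyclic_map_iff (H : Subgroup (ZM 9 4 8)) :
    IsCyclic (Subgroup.map (e : ZM 9 4 8 →* Q) H) ↔ IsCyclic H := by
  constructor
  · intro h
    exact isCyclic_of_surjective _ (e.subgroupMap H).symm.surjective
  · intro h
    exact isCyclic_of_surjective _ (e.subgroupMap H).surjective

lemma image_univ_iff (s : Set (ZM 9 4 8)) : ⇑e '' s = Set.univ ↔ s = Set.univ := by
  rw [← Set.image_eq_image e.injective, Set.image_univ, e.surjective.range_eq]

lemma cond_transfer (H K : Subgroup (ZM 9 4 8)) :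
    ((H : Set (ZM 9 4 8)) * (K : Set (ZM 9 4 8)) = Set.univ) ↔
      ((Subgroup.map (e : ZM 9 4 8 →* Q) H : Set Q) *
        (Subgroup.map (e : ZM 9 4 8 →* Q) K : Set Q) = Set.univ) := by
  rw [Subgroup.coe_map, Subgroup.coe_map]
  rw [show (⇑(e : ZM 9 4 8 →* Q)) = ⇑e from rfl]
  rw [← Set.image_mul, image_univ_iff]

noncomputable def bigE :
    {p : Subgroup (ZM 9 4 8) × Subgroup (ZM 9 4 8) //
        IsCyclic p.1 ∧ IsCyclic p.2 ∧
          (p.1 : Set (ZM 9 4 8)) * (p.2 : Set (ZM 9 4 8)) = Set.univ} ≃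
    {p : Subgroup Q × Subgroup Q //
        IsCyclic p.1 ∧ IsCyclic p.2 ∧ (p.1 : Set Q) * (p.2 : Set Q) = Set.univ} :=
  Equiv.subtypeEquiv
    (Equiv.prodCongr (MulEquiv.mapSubgroup e).toEquiv (MulEquiv.mapSubgroup e).toEquiv)
    (by
      rintro ⟨H, K⟩
      simp only [Equiv.prodCongr_apply, Prod.map]
      rw [show (MulEquiv.mapSubgroup e).toEquiv H = Subgroup.map (e : ZM 9 4 8 →* Q) H from rfl,
        show (MulEquiv.mapSubgroup e).toEquiv K = Subgroup.map (e : ZM 9 4 8 →* Q) K from rfl]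
      change _ ↔ IsCyclic (Subgroup.map (e : ZM 9 4 8 →* Q) H) ∧
        IsCyclic (Subgroup.map (e : ZM 9 4 8 →* Q) K) ∧ _
      rw [cyclic_map_iff, cyclic_map_iff, ← cond_transfer])

end CF2aux

/-- The cyclic factorization number of `ZM(9,4,8)` equals `36`. -/
theorem CF2_ZM948 :
    Nat.card {p : Subgroup (ZM 9 4 8) × Subgroup (ZM 9 4 8) //
        IsCyclic p.1 ∧ IsCyclic p.2 ∧
          (p.1 : Set (ZM 9 4 8)) * (p.2 : Set (ZM 9 4 8)) = Set.univ} = 36 := by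
  rw [Nat.card_congr CF2aux.bigE, CF2aux.main_count, CF2aux.Tcard]
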